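/- arXiv:1609.09052 — 6 statements merged into one kernel-verified Lean document; each statement's English description precedes it below -/
import Mathlib

section
/- Combes–Thomas bound: Let G be a finite simple graph with degrees bounded by d and normalized adjacency matrix H = A/√(d-1). Then for any z with |z| ≥ 2d - 1 and all vertices i, j, the Green's function satisfies |G_{ij}(z)| ≤ (d-1)^{-dist(i,j)/2}, where dist is graph distance. -/
open Matrix

attribute [local instance] Matrix.linftyOpNormedAddCommGroup Matrix.linftyOpNormedRing
  Matrix.linftyOpNormedAlgebra

private lemma ct_dist_adj_le {V : Type*} (G : SimpleGraph V) {i j k : V} (h : G.Adj j k) :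
    G.dist i k ≤ G.dist i j + 1 := by
  by_cases hr : G.Reachable i j
  · obtain ⟨p, hp⟩ := hr.exists_walk_length_eq_dist
    calc G.dist i k ≤ (p.concat h).length := SimpleGraph.dist_le _
    _ = G.dist i j + 1 := by rw [SimpleGraph.Walk.length_concat, hp]
  · have hrk : ¬ G.Reachable i k := fun hk => hr (hk.trans h.reachable.symm)
    simp [SimpleGraph.dist_eq_zero_of_not_reachable hrk]

private lemma ct_entry_le_norm {V : Type*} [Fintype V] [DecidableEq V]
    (B : Matrix V V ℂ) (a b : V) : ‖B a b‖ ≤ ‖B‖ := by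
  have h1 : ‖B a b‖₊ ≤ ∑ k, ‖B a k‖₊ :=
    Finset.single_le_sum (f := fun k => ‖B a k‖₊) (fun _ _ => zero_le) (Finset.mem_univ b)
  have h2 : (∑ k, ‖B a k‖₊) ≤ ‖B‖₊ := by
    rw [Matrix.linfty_opNNNorm_def]
    exact Finset.le_sup (f := fun i => ∑ k, ‖B i k‖₊) (Finset.mem_univ a)
  exact_mod_cast h1.trans h2

/-- Combes–Thomas bound: for a finite simple graph with degrees bounded by `d` and
normalized adjacency matrix `H = A/√(d-1)`, the Green's function `G(z) = (H - z)⁻¹`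
satisfies `|G_{ij}(z)| ≤ (d-1)^{-dist(i,j)/2}` whenever `|z| ≥ 2d - 1`. -/
theorem combes_thomas_bound {V : Type*} [Fintype V] [DecidableEq V]
    (G : SimpleGraph V) [DecidableRel G.Adj] (d : ℕ) (hd : 2 ≤ d)
    (hdeg : ∀ v, G.degree v ≤ d)
    (z : ℂ) (hz : (2 * (d : ℝ) - 1) ≤ ‖z‖)
    (Gf : Matrix V V ℂ)
    (hGf : Gf = (((Real.sqrt ((d : ℝ) - 1) : ℂ))⁻¹ • (G.adjMatrix ℂ)
        - z • (1 : Matrix V V ℂ))⁻¹) :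
    ∀ i j, ‖Gf i j‖ ≤ ((d : ℝ) - 1) ^ (-(G.dist i j : ℝ) / 2) := by
  intro i j
  haveI : Nonempty V := ⟨i⟩
  -- basic numerics
  have hd2 : (2:ℝ) ≤ (d:ℝ) := by exact_mod_cast hd
  set b : ℝ := (d : ℝ) - 1 with hb
  have hb1 : (1:ℝ) ≤ b := by simp only [hb]; linarith
  have hb0 : (0:ℝ) < b := lt_of_lt_of_le one_pos hb1
  set az : ℝ := ‖z‖ with haz
  have hazd : (d:ℝ) + 1 ≤ az := by simp only [haz]; linarith
  have haz0 : (0:ℝ) < az := by linarith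
  have hzne : z ≠ 0 := by
    intro h; rw [h] at haz; simp at haz; rw [haz] at haz0; exact lt_irrefl _ haz0
  -- diagonal conjugator
  set D : V → ℂ := fun v => ((b ^ (-(G.dist i v : ℝ)/2) : ℝ) : ℂ) with hD
  have hDpos : ∀ v, (0:ℝ) < b ^ (-(G.dist i v : ℝ)/2) := fun v => Real.rpow_pos_of_pos hb0 _
  have hDne : ∀ v, D v ≠ 0 := fun v => by
    simp only [hD, ne_eq, Complex.ofReal_eq_zero]
    exact ne_of_gt (hDpos v)
  set A0 : Matrix V V ℂ := ((Real.sqrt b : ℂ))⁻¹ • (G.adjMatrix ℂ) with hA0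
  set M : Matrix V V ℂ := diagonal D with hM
  set Minv : Matrix V V ℂ := diagonal (fun v => (D v)⁻¹) with hMinv
  have hMMinv : M * Minv = 1 := by
    rw [hM, hMinv, diagonal_mul_diagonal,
      show (fun v => D v * (D v)⁻¹) = fun _ => (1:ℂ) from funext fun v => mul_inv_cancel₀ (hDne v),
      diagonal_one]
  have hMinvM : Minv * M = 1 := by
    rw [hMinv, hM, diagonal_mul_diagonal,
      show (fun v => (D v)⁻¹ * D v) = fun _ => (1:ℂ) from funext fun v => inv_mul_cancel₀ (hDne v),
      diagonal_one]
  set C : Matrix V V ℂ := M * A0 * Minv with hC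
  -- entrywise bound on C
  have key : ∀ u v, ‖C u v‖₊ ≤ (if G.Adj u v then 1 else 0 : NNReal) := by
    intro u v
    have hCe : C u v = D u * (((Real.sqrt b : ℂ))⁻¹ * (G.adjMatrix ℂ) u v) * (D v)⁻¹ := by
      simp [hC, hM, hMinv, hA0, Matrix.diagonal_mul, Matrix.mul_diagonal, Matrix.smul_apply,
        smul_eq_mul, mul_comm, mul_assoc, mul_left_comm]
    by_cases hadj : G.Adj u v
    · simp only [hadj, if_true]
      have hent : (G.adjMatrix ℂ) u v = 1 := by simp [hadj]
      have hdist : G.dist i v ≤ G.dist i u + 1 := ct_dist_adj_le G hadj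
      -- real value
      have hsqrt : (Real.sqrt b)⁻¹ = b ^ (-(1/2) : ℝ) := by
        rw [Real.sqrt_eq_rpow, Real.rpow_neg hb0.le]
      have hval : C u v = ((b ^ ((-(G.dist i u : ℝ)/2) + (-(1/2):ℝ) + ((G.dist i v : ℝ)/2)) : ℝ) : ℂ) := by
        rw [hCe, hent, mul_one]
        have h1 : (D v)⁻¹ = ((b ^ ((G.dist i v : ℝ)/2) : ℝ) : ℂ) := by
          rw [hD]
          rw [← Complex.ofReal_inv, ← Real.rpow_neg hb0.le]
          congr 2
          ring
        rw [h1, hD]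
        rw [show ((Real.sqrt b : ℂ))⁻¹ = ((b ^ (-(1/2):ℝ) : ℝ) : ℂ) by
          rw [← Complex.ofReal_inv, hsqrt]]
        rw [← Complex.ofReal_mul, ← Complex.ofReal_mul]
        congr 1
        rw [← Real.rpow_add hb0, ← Real.rpow_add hb0]
      have hexp : (-(G.dist i u : ℝ)/2) + (-(1/2):ℝ) + ((G.dist i v : ℝ)/2) ≤ 0 := by
        have : (G.dist i v : ℝ) ≤ (G.dist i u : ℝ) + 1 := by exact_mod_cast hdist
        linarith
      have hle1 : ‖C u v‖ ≤ 1 := by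
        rw [hval, Complex.norm_real, Real.norm_eq_abs,
          abs_of_pos (Real.rpow_pos_of_pos hb0 _)]
        exact Real.rpow_le_one_of_one_le_of_nonpos hb1 hexp
      rw [← NNReal.coe_le_coe]
      simpa using hle1
    · simp only [hadj, if_false]
      have : C u v = 0 := by
        rw [hCe]; simp [hadj]
      simp [this]
  -- norm bound on C
  have hCnorm : ‖C‖ ≤ (d : ℝ) := by
    have hCnn : ‖C‖₊ ≤ (d : NNReal) := by
      rw [Matrix.linfty_opNNNorm_def]
      refine Finset.sup_le fun u _ => ?_
      calc ∑ v, ‖C u v‖₊ ≤ ∑ v, (if G.Adj u v then 1 else 0 : NNReal) :=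
            Finset.sum_le_sum fun v _ => key u v
      _ = ((G.degree u : ℕ) : NNReal) := by
            rw [Finset.sum_boole]
            simp [SimpleGraph.degree, SimpleGraph.neighborFinset_eq_filter]
      _ ≤ (d : NNReal) := by exact_mod_cast hdeg u
    exact_mod_cast hCnn
  -- the perturbation x
  set x : Matrix V V ℂ := z⁻¹ • C with hx
  have hxnorm : ‖x‖ ≤ (d:ℝ) / az := by
    rw [hx, norm_smul, norm_inv, ← haz]
    rw [div_eq_inv_mul]
    exact mul_le_mul_of_nonneg_left hCnorm (by positivity)
  have hx1 : ‖x‖ < 1 := by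
    refine lt_of_le_of_lt hxnorm ?_
    rw [div_lt_one haz0]; linarith
  have hxu : IsUnit (1 - x) := isUnit_one_sub_of_norm_lt_one hx1
  have hinv_norm : ‖(1 - x)⁻¹‖ ≤ (1 - ‖x‖)⁻¹ := by
    rw [Matrix.nonsing_inv_eq_ringInverse, ← geom_series_eq_inverse x hx1]
    calc ‖∑' n : ℕ, x ^ n‖ ≤ ‖(1 : Matrix V V ℂ)‖ - 1 + (1 - ‖x‖)⁻¹ :=
          tsum_geometric_le_of_norm_lt_one x hx1
    _ = (1 - ‖x‖)⁻¹ := by rw [norm_one]; ring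
  -- scalar matrix S
  set S : Matrix V V ℂ := (-z) • (1 : Matrix V V ℂ) with hS
  set Sinv : Matrix V V ℂ := (-z)⁻¹ • (1 : Matrix V V ℂ) with hSinv
  have hzne' : -z ≠ 0 := neg_ne_zero.mpr hzne
  have hSS : S * Sinv = 1 := by
    rw [hS, hSinv, Matrix.smul_mul, Matrix.mul_smul, one_mul, smul_smul,
      mul_inv_cancel₀ hzne', one_smul]
  have hSS' : Sinv * S = 1 := by
    rw [hS, hSinv, Matrix.smul_mul, Matrix.mul_smul, one_mul, smul_smul,
      inv_mul_cancel₀ hzne', one_smul]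
  have hSunit : IsUnit S := ⟨⟨S, Sinv, hSS, hSS'⟩, rfl⟩
  -- B' = C - z•1 = S * (1-x)
  have hBeq : S * (1 - x) = C - z • 1 := by
    rw [mul_sub, mul_one, hS, hx, Matrix.smul_mul, one_mul, smul_smul]
    rw [neg_mul, mul_inv_cancel₀ hzne]
    simp [sub_eq_add_neg, neg_smul]
    abel
  have hBunit : IsUnit (C - z • (1 : Matrix V V ℂ)) := hBeq ▸ hSunit.mul hxu
  -- conjugation identity
  set H' : Matrix V V ℂ := A0 - z • (1 : Matrix V V ℂ) with hH'def
  have hMH : M * H' * Minv = C - z • 1 := by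
    have h2 : M * (z • (1 : Matrix V V ℂ)) * Minv = z • 1 := by
      rw [Matrix.mul_smul, Matrix.smul_mul, mul_one, hMMinv]
    rw [hH'def, mul_sub, sub_mul, h2, hC]
  have hH' : H' = Minv * (C - z • 1) * M := by
    calc H' = (Minv * M) * H' * (Minv * M) := by rw [hMinvM, one_mul, mul_one]
    _ = Minv * (M * H' * Minv) * M := by simp only [mul_assoc]
    _ = Minv * (C - z • 1) * M := by rw [hMH]
  have hGf' : H'⁻¹ = Minv * (C - z • 1)⁻¹ * M := by
    rw [hH', Matrix.mul_inv_rev, Matrix.mul_inv_rev,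
      Matrix.inv_eq_right_inv hMMinv, Matrix.inv_eq_right_inv hMinvM]
    simp only [mul_assoc]
  -- norm of the inverse of C - z•1
  have hBinv : (C - z • (1 : Matrix V V ℂ))⁻¹ = (1 - x)⁻¹ * Sinv := by
    rw [← hBeq, Matrix.mul_inv_rev, Matrix.inv_eq_right_inv hSS]
  have hBnorm : ‖(C - z • (1 : Matrix V V ℂ))⁻¹‖ ≤ 1 := by
    rw [hBinv]
    have h2 : ‖Sinv‖ = az⁻¹ := by
      rw [hSinv, norm_smul, norm_one, mul_one, norm_inv, norm_neg, haz]
    calc ‖(1 - x)⁻¹ * Sinv‖ ≤ ‖(1 - x)⁻¹‖ * ‖Sinv‖ := norm_mul_le _ _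
    _ ≤ (1 - ‖x‖)⁻¹ * az⁻¹ := by
        rw [h2]
        exact mul_le_mul_of_nonneg_right hinv_norm (by positivity)
    _ ≤ 1 := by
        rw [← mul_inv]
        have hx0 : (0:ℝ) ≤ ‖x‖ := norm_nonneg _
        have h1 : az * ‖x‖ ≤ (d:ℝ) := by
          calc az * ‖x‖ ≤ az * ((d:ℝ)/az) := mul_le_mul_of_nonneg_left hxnorm haz0.le
          _ = (d:ℝ) := by field_simp
        have h3 : (1:ℝ) ≤ (1 - ‖x‖) * az := by nlinarith
        exact inv_le_one_of_one_le₀ h3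
  -- finish
  have hGfij : Gf i j = (D i)⁻¹ * ((C - z • 1)⁻¹ i j) * D j := by
    rw [hGf, hGf', hMinv, hM]
    simp [Matrix.diagonal_mul, Matrix.mul_diagonal]
  have hDi : D i = 1 := by
    simp [hD, SimpleGraph.dist_self]
  rw [hGfij, hDi, inv_one, one_mul]
  rw [norm_mul]
  have hDj : ‖D j‖ = b ^ (-(G.dist i j : ℝ)/2) := by
    rw [hD, Complex.norm_real, Real.norm_eq_abs, abs_of_pos (hDpos j)]
  rw [hDj]
  calc ‖(C - z • 1)⁻¹ i j‖ * (b ^ (-(G.dist i j : ℝ)/2))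
      ≤ 1 * (b ^ (-(G.dist i j : ℝ)/2)) := by
        refine mul_le_mul_of_nonneg_right ?_ (hDpos j).le
        exact le_trans (ct_entry_le_norm _ i j) hBnorm
  _ = b ^ (-(G.dist i j : ℝ)/2) := one_mul _
end

section
/- Let B be a ball (connected graph) with excess at most ω, let T be the subgraph induced on vertices within distance ℓ of the center, and let {a₁,…,a_μ} be the vertices at distance ℓ+1 from the center (the outer boundary). Partition the indices according to the connected components of the annulus A = B minus T. If A₁,…,A_α are the parts of size > 1 and β is the total number of indices lying in parts of size > 1, then α ≤ ω, β ≤ 2ω, and every part has size at most ω + 1. -/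
open SimpleGraph

private lemma walk_propagate {V : Type*} {G G' : SimpleGraph V} {v₀ : V}
    (step : ∀ x y, G.Adj x y → G'.Reachable v₀ x → G'.Reachable v₀ y) :
    ∀ {u v : V}, G.Walk u v → G'.Reachable v₀ u → G'.Reachable v₀ v := by
  intro u v p
  induction p with
  | nil => exact id
  | cons h q ih => exact fun hu => ih (step _ _ h hu)

private lemma connected_of_step {V : Type*} {G G' : SimpleGraph V} {v₀ : V}
    (hG : G.Connected)
    (step : ∀ x y, G.Adj x y → G'.Reachable v₀ x → G'.Reachable v₀ y) :
    G'.Connected := by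
  have hreach : ∀ v, G'.Reachable v₀ v := fun v =>
    walk_propagate step (hG v₀ v).some (Reachable.refl v₀)
  have := hG.nonempty
  exact SimpleGraph.Connected.mk fun u v => (hreach u).symm.trans (hreach v)

private lemma connected_card_vert_le_aux {V : Type*} [Fintype V] :
    ∀ (n : ℕ) (G : SimpleGraph V), G.Connected → G.edgeSet.ncard = n →
      Fintype.card V ≤ n + 1 := by
  intro n
  induction n using Nat.strong_induction_on with
  | _ n ih =>
    intro G h hn
    classical
    by_cases hac : G.IsAcyclic
    · have ht : G.IsTree := ⟨h, hac⟩
      have hc := ht.card_edgeFinset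
      have hcc : G.edgeSet.ncard = G.edgeFinset.card := Set.ncard_eq_toFinset_card' _
      omega
    · rw [isAcyclic_iff_forall_adj_isBridge] at hac
      push_neg at hac
      obtain ⟨x, y, hxy, hbr⟩ := hac
      have hreach : (G.deleteEdges {s(x, y)}).Reachable x y := by
        by_contra hc
        exact hbr hc
      have hstep : ∀ u v, G.Adj u v → (G.deleteEdges {s(x, y)}).Reachable x u →
          (G.deleteEdges {s(x, y)}).Reachable x v := by
        intro u v huv hu
        by_cases he : s(u, v) = s(x, y)
        · rw [Sym2.eq_iff] at he
          rcases he with ⟨rfl, rfl⟩ | ⟨rfl, rfl⟩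
          · exact hreach
          · exact Reachable.refl _
        · exact hu.trans (SimpleGraph.Adj.reachable
            (SimpleGraph.deleteEdges_adj.mpr ⟨huv, by simpa using he⟩))
      have hG' : (G.deleteEdges {s(x, y)}).Connected := connected_of_step h hstep
      have hmem : s(x, y) ∈ G.edgeSet := hxy
      have hpos : 1 ≤ n := by
        rw [← hn]
        exact (Set.ncard_pos (Set.toFinite _)).mpr ⟨_, hmem⟩
      have hcard : (G.deleteEdges {s(x, y)}).edgeSet.ncard = n - 1 := by
        rw [SimpleGraph.edgeSet_deleteEdges, Set.ncard_diff_singleton_of_mem hmem, hn]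
      have := ih (n - 1) (by omega) _ hG' hcard
      omega

private lemma connected_card_vert_le {V : Type*} [Fintype V] (G : SimpleGraph V)
    (h : G.Connected) : Fintype.card V ≤ G.edgeSet.ncard + 1 :=
  connected_card_vert_le_aux G.edgeSet.ncard G h rfl

/-- Clustering of boundary vertices of a ball (Lemma on `α ≤ ω`, `β ≤ 2ω`, `|A_j| ≤ ω+1`):
let `B` be a finite connected graph with excess at most `ω`, rooted at `v₀`, let `T` be
the ball of radius `ℓ` around `v₀`, and let `e_i = {l_i, a_i}`, `i < μ`, enumerate the
distinct boundary edges of `T` (with `l_i ∈ T`, `a_i ∉ T`). Declare `i ∼ j` iff `a_i`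
and `a_j` lie in the same connected component of the annulus `A = B ∖ T` (the induced
graph on the complement of `T`). Then: every `∼`-class has at most `ω + 1` elements;
the number `β` of indices lying in classes of size `> 1` is at most `2ω`; and the
number `α` of classes of size `> 1` is at most `ω`. -/
theorem annulus_component_clustering {V : Type*} [Fintype V] (B : SimpleGraph V)
    (ω ℓ μ : ℕ) (v₀ : V)
    (hconn : B.Connected)
    (hexc : (B.edgeSet.ncard : ℤ) ≤ (Fintype.card V : ℤ) - 1 + (ω : ℤ))
    (l a : Fin μ → V)
    (hl : ∀ i, B.dist v₀ (l i) ≤ ℓ)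
    (ha : ∀ i, ¬ B.dist v₀ (a i) ≤ ℓ)
    (hadj : ∀ i, B.Adj (l i) (a i))
    (hdistinct : ∀ i j, i ≠ j → s(l i, a i) ≠ s(l j, a j))
    (hcover : ∀ u v : V, B.Adj u v → B.dist v₀ u ≤ ℓ → ¬ B.dist v₀ v ≤ ℓ →
      ∃ i, l i = u ∧ a i = v) :
    -- every class has at most ω + 1 elements
    (∀ i : Fin μ,
      {j : Fin μ | (B.induce {v : V | ¬ B.dist v₀ v ≤ ℓ}).Reachable
          ⟨a i, ha i⟩ ⟨a j, ha j⟩}.ncard ≤ ω + 1) ∧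
    -- β ≤ 2ω : at most 2ω indices lie in classes of size > 1
    ({i : Fin μ | ∃ j, j ≠ i ∧ (B.induce {v : V | ¬ B.dist v₀ v ≤ ℓ}).Reachable
          ⟨a i, ha i⟩ ⟨a j, ha j⟩}.ncard ≤ 2 * ω) ∧
    -- α ≤ ω : any system of representatives of distinct classes of size > 1 has ≤ ω elements
    (∀ s : Finset (Fin μ),
      (∀ i ∈ s, ∃ j, j ≠ i ∧ (B.induce {v : V | ¬ B.dist v₀ v ≤ ℓ}).Reachable
          ⟨a i, ha i⟩ ⟨a j, ha j⟩) →
      (∀ i ∈ s, ∀ j ∈ s, i ≠ j → ¬ (B.induce {v : V | ¬ B.dist v₀ v ≤ ℓ}).Reachable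
          ⟨a i, ha i⟩ ⟨a j, ha j⟩) →
      s.card ≤ ω) := by
  classical
  -- the master lemma
  have key : ∀ s : Finset (Fin μ),
      (∀ i ∈ s, ∃ j ∉ s, (B.induce {v : V | ¬ B.dist v₀ v ≤ ℓ}).Reachable
        ⟨a i, ha i⟩ ⟨a j, ha j⟩) →
      s.card ≤ ω := by
    intro s hs
    set D : Set (Sym2 V) := (fun i => s(l i, a i)) '' ↑s with hD
    have hDmem : ∀ e ∈ D, ∃ i ∈ s, s(l i, a i) = e := by
      rintro e ⟨i, hi, rfl⟩; exact ⟨i, hi, rfl⟩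
    -- edges with both endpoints outside the ball are not deleted
    have hDnotout : ∀ x y : V, ¬ B.dist v₀ x ≤ ℓ → ¬ B.dist v₀ y ≤ ℓ → s(x, y) ∉ D := by
      intro x y hx hy hmem
      obtain ⟨i, _, he⟩ := hDmem _ hmem
      rw [Sym2.eq_iff] at he
      rcases he with ⟨h1, _⟩ | ⟨h1, _⟩
      · exact hx (h1 ▸ hl i)
      · exact hy (h1 ▸ hl i)
    -- Step A : every vertex of the ball is reachable from v₀ in the deleted graph
    have stepA : ∀ u, B.dist v₀ u ≤ ℓ → (B.deleteEdges D).Reachable v₀ u := by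
      intro u hu
      obtain ⟨p, hp⟩ := hconn.exists_walk_length_eq_dist v₀ u
      have haux : ∀ (w u' : V) (q : B.Walk w u') (x : V), x ∈ q.support →
          B.dist v₀ x ≤ B.dist v₀ w + q.length := by
        intro w u' q
        induction q with
        | nil =>
          intro x hx
          rw [SimpleGraph.Walk.support_nil, List.mem_singleton] at hx
          subst hx; simp
        | @cons w w' u' hadj' q ih =>
          intro x hx
          rw [SimpleGraph.Walk.support_cons, List.mem_cons] at hx
          rcases hx with rfl | hx
          · simp
          · have h1 := ih x hx
            have h2 : B.dist v₀ w' ≤ B.dist v₀ w + 1 :=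
              le_trans (hconn.dist_triangle (v := w))
                (by
                  have := SimpleGraph.dist_le hadj'.toWalk
                  simp only [SimpleGraph.Walk.length_cons, SimpleGraph.Walk.length_nil] at this
                  omega)
            simp only [SimpleGraph.Walk.length_cons]
            omega
      have hsup : ∀ x ∈ p.support, B.dist v₀ x ≤ ℓ := by
        intro x hx
        have := haux v₀ u p x hx
        rw [SimpleGraph.dist_self, zero_add, hp] at this
        exact le_trans this hu
      refine SimpleGraph.Walk.reachable (p.toDeleteEdges D ?_)
      intro e he heD
      obtain ⟨i, _, hei⟩ := hDmem _ heD
      have hmem : a i ∈ p.support :=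
        SimpleGraph.Walk.snd_mem_support_of_mem_edges p (hei ▸ he)
      exact ha i (hsup _ hmem)
    -- Step B : the outer endpoint of a non-deleted boundary edge is reachable
    have stepB : ∀ j, j ∉ s → (B.deleteEdges D).Reachable v₀ (a j) := by
      intro j hj
      have hedge : s(l j, a j) ∉ D := by
        intro hmem
        obtain ⟨i, hi, he⟩ := hDmem _ hmem
        by_cases hij : i = j
        · subst hij; exact hj hi
        · exact hdistinct i j hij he
      exact (stepA (l j) (hl j)).trans
        (SimpleGraph.Adj.reachable (SimpleGraph.deleteEdges_adj.mpr ⟨hadj j, hedge⟩))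
    -- Step C : reachability in the annulus transfers to the deleted graph
    have stepC : ∀ (x y : {v : V | ¬ B.dist v₀ v ≤ ℓ}),
        (B.induce {v : V | ¬ B.dist v₀ v ≤ ℓ}).Walk x y →
        (B.deleteEdges D).Reachable x.1 y.1 := by
      intro x y w
      induction w with
      | nil => exact Reachable.refl _
      | @cons x z y hadj' q ih =>
        have hBadj : B.Adj x.1 z.1 := hadj'
        have hnot : s(x.1, z.1) ∉ D := hDnotout _ _ x.2 z.2
        exact (SimpleGraph.Adj.reachable
          (SimpleGraph.deleteEdges_adj.mpr ⟨hBadj, hnot⟩)).trans ih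
    -- the one-step propagation
    have step : ∀ x y, B.Adj x y → (B.deleteEdges D).Reachable v₀ x →
        (B.deleteEdges D).Reachable v₀ y := by
      intro x y hxy hx
      by_cases hY : B.dist v₀ y ≤ ℓ
      · exact stepA y hY
      by_cases hX : B.dist v₀ x ≤ ℓ
      · obtain ⟨i, hlx, hay⟩ := hcover x y hxy hX hY
        by_cases hi : i ∈ s
        · obtain ⟨j, hj, hr⟩ := hs i hi
          have h1 := stepB j hj
          have h2 : (B.deleteEdges D).Reachable (a j) (a i) :=
            hr.symm.elim (stepC ⟨a j, ha j⟩ ⟨a i, ha i⟩)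
          rw [hay] at h2
          exact h1.trans h2
        · have hnot : s(x, y) ∉ D := by
            intro hmem
            obtain ⟨k, hk, he⟩ := hDmem _ hmem
            rw [← hlx, ← hay] at he
            by_cases hki : k = i
            · subst hki; exact hi hk
            · exact hdistinct k i hki he
          exact hx.trans (SimpleGraph.Adj.reachable
            (SimpleGraph.deleteEdges_adj.mpr ⟨hxy, hnot⟩))
      · exact hx.trans (SimpleGraph.Adj.reachable
          (SimpleGraph.deleteEdges_adj.mpr ⟨hxy, hDnotout x y hX hY⟩))
    have hG'conn : (B.deleteEdges D).Connected := connected_of_step hconn step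
    -- counting
    have hcount := connected_card_vert_le _ hG'conn
    rw [SimpleGraph.edgeSet_deleteEdges] at hcount
    have hsub : D ⊆ B.edgeSet := by
      rintro e ⟨i, _, rfl⟩
      exact hadj i
    have hdiff : (B.edgeSet \ D).ncard = B.edgeSet.ncard - D.ncard :=
      Set.ncard_diff hsub (Set.toFinite _)
    have hDcard : D.ncard = s.card := by
      rw [hD, Set.ncard_image_of_injOn, Set.ncard_coe_finset]
      intro i _ j _ h
      by_contra hne
      exact hdistinct i j hne h
    have hle : D.ncard ≤ B.edgeSet.ncard := Set.ncard_le_ncard hsub (Set.toFinite _)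
    omega
  -- Part 3 : α ≤ ω
  have part3 : ∀ s : Finset (Fin μ),
      (∀ i ∈ s, ∃ j, j ≠ i ∧ (B.induce {v : V | ¬ B.dist v₀ v ≤ ℓ}).Reachable
          ⟨a i, ha i⟩ ⟨a j, ha j⟩) →
      (∀ i ∈ s, ∀ j ∈ s, i ≠ j → ¬ (B.induce {v : V | ¬ B.dist v₀ v ≤ ℓ}).Reachable
          ⟨a i, ha i⟩ ⟨a j, ha j⟩) →
      s.card ≤ ω := by
    intro s h1 h2
    refine key s ?_
    intro i hi
    obtain ⟨j, hji, hr⟩ := h1 i hi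
    exact ⟨j, fun hj => h2 i hi j hj hji.symm hr, hr⟩
  -- Part 1 : every class has at most ω + 1 elements
  have part1 : ∀ i : Fin μ,
      {j : Fin μ | (B.induce {v : V | ¬ B.dist v₀ v ≤ ℓ}).Reachable
          ⟨a i, ha i⟩ ⟨a j, ha j⟩}.ncard ≤ ω + 1 := by
    intro i
    set C : Finset (Fin μ) := Finset.univ.filter
      (fun j => (B.induce {v : V | ¬ B.dist v₀ v ≤ ℓ}).Reachable
          ⟨a i, ha i⟩ ⟨a j, ha j⟩) with hC
    have hCeq : {j : Fin μ | (B.induce {v : V | ¬ B.dist v₀ v ≤ ℓ}).Reachable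
        ⟨a i, ha i⟩ ⟨a j, ha j⟩} = ↑C := by
      ext j; simp [hC]
    rw [hCeq, Set.ncard_coe_finset]
    have hiC : i ∈ C := by
      rw [hC, Finset.mem_filter]
      exact ⟨Finset.mem_univ _, Reachable.refl _⟩
    have herase : (C.erase i).card ≤ ω := by
      refine key _ ?_
      intro j hj
      have hjC := Finset.mem_of_mem_erase hj
      rw [hC, Finset.mem_filter] at hjC
      exact ⟨i, Finset.notMem_erase i C, hjC.2.symm⟩
    have hcarde := Finset.card_erase_of_mem hiC
    have hpos : 1 ≤ C.card := Finset.card_pos.mpr ⟨i, hiC⟩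
    omega
  -- Part 2 : β ≤ 2ω
  refine ⟨part1, ?_, part3⟩
  -- representative of each class : the minimum of the class
  set Cl : Fin μ → Finset (Fin μ) := fun i => Finset.univ.filter
    (fun j => (B.induce {v : V | ¬ B.dist v₀ v ≤ ℓ}).Reachable
        ⟨a i, ha i⟩ ⟨a j, ha j⟩) with hCl
  have hmemCl : ∀ i, i ∈ Cl i := by
    intro i
    rw [hCl]
    rw [Finset.mem_filter]
    exact ⟨Finset.mem_univ _, Reachable.refl _⟩
  set rep : Fin μ → Fin μ := fun i => (Cl i).min' ⟨i, hmemCl i⟩ with hrep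
  have hCl_mem : ∀ i k, k ∈ Cl i → (B.induce {v : V | ¬ B.dist v₀ v ≤ ℓ}).Reachable
      ⟨a i, ha i⟩ ⟨a k, ha k⟩ := by
    intro i k hk
    simp only [hCl, Finset.mem_filter, Finset.mem_univ, true_and] at hk
    exact hk
  have hrep_reach : ∀ i, (B.induce {v : V | ¬ B.dist v₀ v ≤ ℓ}).Reachable
      ⟨a i, ha i⟩ ⟨a (rep i), ha (rep i)⟩ := by
    intro i
    exact hCl_mem i (rep i) ((Cl i).min'_mem ⟨i, hmemCl i⟩)
  have hCl_trans : ∀ i j k, (B.induce {v : V | ¬ B.dist v₀ v ≤ ℓ}).Reachable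
      ⟨a i, ha i⟩ ⟨a j, ha j⟩ → k ∈ Cl i → k ∈ Cl j := by
    intro i j k hij hk
    simp only [hCl, Finset.mem_filter, Finset.mem_univ, true_and] at hk ⊢
    exact hij.symm.trans hk
  have hrep_eq : ∀ i j, (B.induce {v : V | ¬ B.dist v₀ v ≤ ℓ}).Reachable
      ⟨a i, ha i⟩ ⟨a j, ha j⟩ → rep i = rep j := by
    intro i j hij
    have h1 : (Cl j).min' ⟨j, hmemCl j⟩ ∈ Cl i :=
      hCl_trans j i _ hij.symm ((Cl j).min'_mem _)
    have h2 : (Cl i).min' ⟨i, hmemCl i⟩ ∈ Cl j :=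
      hCl_trans i j _ hij ((Cl i).min'_mem _)
    exact le_antisymm (Finset.min'_le _ _ h1) (Finset.min'_le _ _ h2)
  have hrep_idem : ∀ i, rep (rep i) = rep i := fun i => (hrep_eq i (rep i) (hrep_reach i)).symm
  set S : Finset (Fin μ) := Finset.univ.filter
    (fun i => ∃ j, j ≠ i ∧ (B.induce {v : V | ¬ B.dist v₀ v ≤ ℓ}).Reachable
        ⟨a i, ha i⟩ ⟨a j, ha j⟩) with hS
  have hSeq : {i : Fin μ | ∃ j, j ≠ i ∧ (B.induce {v : V | ¬ B.dist v₀ v ≤ ℓ}).Reachable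
      ⟨a i, ha i⟩ ⟨a j, ha j⟩} = ↑S := by
    ext i; simp [hS]
  rw [hSeq, Set.ncard_coe_finset]
  have hsplit := Finset.card_filter_add_card_filter_not
    (s := S) (p := fun i => rep i = i)
  have ht : (S.filter (fun i => rep i = i)).card ≤ ω := by
    refine part3 _ ?_ ?_
    · intro i hi
      have := (Finset.mem_filter.mp hi).1
      rw [hS, Finset.mem_filter] at this
      exact this.2
    · intro i hi j hj hij hreach
      have hi' := (Finset.mem_filter.mp hi).2
      have hj' := (Finset.mem_filter.mp hj).2
      exact hij (hi' ▸ hj' ▸ hrep_eq i j hreach)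
  have hs1 : (S.filter (fun i => ¬ rep i = i)).card ≤ ω := by
    refine key _ ?_
    intro i hi
    have hi' := Finset.mem_filter.mp hi
    refine ⟨rep i, ?_, hrep_reach i⟩
    intro hmem
    have := (Finset.mem_filter.mp hmem).2
    exact this (hrep_idem i)
  omega
end

section
/- Let G be a d-regular graph on N vertices whose ball of radius R around vertex 1 has excess at most ω, let T be the ball of radius ℓ ≪ R around vertex 1 with boundary vertices a₁,…,a_μ (endpoints outside T of boundary edges). Then after removing T, any vertex x outside T is within distance R/2 (in G with T removed) of at most ω + 1 of the boundary vertices a_p. -/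
private lemma dist_triangle_reach {V : Type*} {G : SimpleGraph V} {u v w : V}
    (h1 : G.Reachable u v) (h2 : G.Reachable v w) :
    G.dist u w ≤ G.dist u v + G.dist v w := by
  obtain ⟨p, hp⟩ := h1.exists_walk_length_eq_dist
  obtain ⟨q, hq⟩ := h2.exists_walk_length_eq_dist
  rw [← hp, ← hq, ← SimpleGraph.Walk.length_append]
  exact SimpleGraph.dist_le _

private lemma exists_pred {V : Type*} (G : SimpleGraph V) {u v : V}
    (h : G.Reachable u v) (hne : v ≠ u) :
    ∃ z, G.Adj v z ∧ G.Reachable u z ∧ G.dist u z + 1 = G.dist u v := by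
  have hpos : 0 < G.dist u v := h.pos_dist_of_ne (Ne.symm hne)
  obtain ⟨p, hp⟩ := h.symm.exists_walk_length_eq_dist
  rw [SimpleGraph.dist_comm] at hp
  cases p with
  | nil => exact absurd rfl hne
  | cons hadj q =>
    rename_i b
    refine ⟨b, hadj, ⟨q.reverse⟩, ?_⟩
    have h1 : G.dist u b ≤ q.length := by
      simpa using SimpleGraph.dist_le q.reverse
    have h2 : G.dist u v ≤ G.dist u b + 1 := by
      refine le_trans (dist_triangle_reach ⟨q.reverse⟩ ⟨(SimpleGraph.Walk.cons hadj SimpleGraph.Walk.nil).reverse⟩) ?_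
      have : G.dist b v ≤ 1 := by
        simpa using SimpleGraph.dist_le (SimpleGraph.Walk.cons hadj SimpleGraph.Walk.nil).reverse
      omega
    have h3 : q.length + 1 = G.dist u v := by
      simpa using hp
    omega

private lemma induce_reach_dist {V : Type*} (G : SimpleGraph V) (s : Set V) {u v : ↥s}
    (h : (G.induce s).Reachable u v) :
    G.Reachable u.val v.val ∧ G.dist u.val v.val ≤ (G.induce s).dist u v := by
  obtain ⟨p, hp⟩ := h.exists_walk_length_eq_dist
  let f : G.induce s →g G := ⟨Subtype.val, fun h => h⟩
  refine ⟨⟨p.map f⟩, ?_⟩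
  have := SimpleGraph.dist_le (p.map f)
  rwa [SimpleGraph.Walk.length_map, hp] at this

/-- Any vertex outside the ball `T` is close to few boundary vertices: let `G` be a
finite simple `d`-regular graph whose ball of radius `R` around `v₀` has excess at most
`ω`, let `T` be the ball of radius `ℓ` (with `ℓ ≪ R`, encoded as `ℓ + 1 + R/2 ≤ R`),
and let `e_i = {l_i, a_i}`, `i < μ`, enumerate the distinct boundary edges of `T`.
Then any vertex `x ∉ T` is within distance `R/2` (in the graph `G⁽ᵀ⁾` obtained by
removing `T`) of at most `ω + 1` of the boundary vertices `a_p`. -/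
theorem few_close_boundary_vertices {V : Type*} [Fintype V] [DecidableEq V]
    (G : SimpleGraph V) [DecidableRel G.Adj]
    (d ω R ℓ μ : ℕ) (v₀ : V)
    (hreg : G.IsRegularOfDegree d)
    (hball : ((G.induce {v : V | G.dist v₀ v ≤ R}).edgeSet.ncard : ℤ)
        - ({v : V | G.dist v₀ v ≤ R}.ncard : ℤ) + 1 ≤ (ω : ℤ))
    (hlR : ℓ + 1 + R / 2 ≤ R)
    (l a : Fin μ → V)
    (hl : ∀ i, G.dist v₀ (l i) ≤ ℓ)
    (ha : ∀ i, ¬ G.dist v₀ (a i) ≤ ℓ)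
    (hadj : ∀ i, G.Adj (l i) (a i))
    (hdistinct : ∀ i j, i ≠ j → s(l i, a i) ≠ s(l j, a j))
    (hcover : ∀ u v : V, G.Adj u v → G.dist v₀ u ≤ ℓ → ¬ G.dist v₀ v ≤ ℓ →
      ∃ i, l i = u ∧ a i = v) :
    ∀ (x : V) (hx : ¬ G.dist v₀ x ≤ ℓ),
      {p : Fin μ |
        (G.induce {v : V | ¬ G.dist v₀ v ≤ ℓ}).Reachable ⟨x, hx⟩ ⟨a p, ha p⟩ ∧
        (G.induce {v : V | ¬ G.dist v₀ v ≤ ℓ}).dist ⟨x, hx⟩ ⟨a p, ha p⟩ ≤ R / 2}.ncard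
        ≤ ω + 1 := by
  classical
  intro x hx
  set T' : Set V := {v : V | ¬ G.dist v₀ v ≤ ℓ} with hT'def
  set G' : SimpleGraph ↥T' := G.induce T' with hG'def
  set S : Set (Fin μ) :=
    {p : Fin μ | G'.Reachable ⟨x, hx⟩ ⟨a p, ha p⟩ ∧
      G'.dist ⟨x, hx⟩ ⟨a p, ha p⟩ ≤ R / 2} with hSdef
  show S.ncard ≤ ω + 1
  by_contra hk
  push_neg at hk
  -- basic reachability facts
  have hreachT' : ∀ v : V, v ∈ T' → G.Reachable v₀ v := by
    intro v hv
    refine SimpleGraph.Reachable.of_dist_ne_zero (fun h => hv ?_)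
    omega
  have hxr : G.Reachable v₀ x := hreachT' x hx
  have har : ∀ p, G.Reachable v₀ (a p) := fun p => hreachT' _ (ha p)
  have hlr : ∀ p, G.Reachable v₀ (l p) := fun p => (har p).trans (hadj p).reachable.symm
  have hxv₀ : x ≠ v₀ := by
    intro h
    exact hx (by rw [h, SimpleGraph.dist_self]; exact Nat.zero_le ℓ)
  have hdva : ∀ p, G.dist v₀ (a p) ≤ ℓ + 1 := by
    intro p
    have h1 := dist_triangle_reach (hlr p) (hadj p).reachable
    have h2 : G.dist (l p) (a p) = 1 := SimpleGraph.dist_eq_one_iff_adj.mpr (hadj p)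
    have h3 := hl p
    omega
  -- the key sets
  set Yset : Set V := {v : V | G.Reachable v₀ v ∧ G.dist v₀ v ≤ R} with hYdef
  set U : Set V := {v : V | ¬ G.Reachable v₀ v} with hUdef
  set W : Set V := {v : V | ∃ hv : v ∈ T', ∃ p, p ∈ S ∧
    G'.Reachable ⟨x, hx⟩ ⟨v, hv⟩ ∧ G'.Reachable ⟨v, hv⟩ ⟨a p, ha p⟩ ∧
    G'.dist ⟨x, hx⟩ ⟨v, hv⟩ + G'.dist ⟨v, hv⟩ ⟨a p, ha p⟩ ≤ R / 2} with hWdef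
  have hSne : S.Nonempty := by
    apply Set.nonempty_of_ncard_ne_zero
    omega
  have hWT : ∀ v ∈ W, v ∈ T' := fun v hv => hv.choose
  have hWspec : ∀ v, v ∈ W → ∀ (hv : v ∈ T'),
      G'.Reachable ⟨x, hx⟩ ⟨v, hv⟩ ∧ ∃ p, p ∈ S ∧
        G'.Reachable ⟨v, hv⟩ ⟨a p, ha p⟩ ∧
        G'.dist ⟨x, hx⟩ ⟨v, hv⟩ + G'.dist ⟨v, hv⟩ ⟨a p, ha p⟩ ≤ R / 2 := by
    rintro v ⟨hv', p, hp, h1, h2, h3⟩ hv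
    exact ⟨h1, p, hp, h2, h3⟩
  have hWx : x ∈ W := by
    obtain ⟨p, hp⟩ := hSne
    refine ⟨hx, p, hp, SimpleGraph.Reachable.refl _, hp.1, ?_⟩
    have := hp.2
    simpa [SimpleGraph.dist_self] using this
  have hWa : ∀ p ∈ S, a p ∈ W := by
    intro p hp
    refine ⟨ha p, p, hp, hp.1, SimpleGraph.Reachable.refl _, ?_⟩
    have := hp.2
    simpa [SimpleGraph.dist_self] using this
  have hWY : ∀ v ∈ W, v ∈ Yset := by
    intro v hv
    have hvT := hWT v hv
    obtain ⟨hreachX, p, hp, hrv, hsum⟩ := hWspec v hv hvT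
    refine ⟨hreachT' v hvT, ?_⟩
    have hind := induce_reach_dist G T' hrv
    have h1 : G.dist v₀ v ≤ G.dist v₀ (a p) + G.dist (a p) v :=
      dist_triangle_reach (har p) hind.1.symm
    have h2 : G.dist (a p) v = G.dist v (a p) := SimpleGraph.dist_comm
    have h3 : G.dist v (a p) ≤ G'.dist ⟨v, hvT⟩ ⟨a p, ha p⟩ := hind.2
    have h4 := hdva p
    omega
  have hxY : x ∈ Yset := hWY x hWx
  have hv₀Y : v₀ ∈ Yset := by
    refine ⟨SimpleGraph.Reachable.refl _, ?_⟩
    simp [SimpleGraph.dist_self]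
  -- d ≥ 2
  have hd2 : 2 ≤ d := by
    have h1 : 1 < S.ncard := by omega
    obtain ⟨p, q, hp, hq, hpq⟩ := (Set.one_lt_ncard_iff (Set.toFinite _)).mp h1
    by_cases hapq : a p = a q
    · have hlpq : l p ≠ l q := by
        intro h
        exact hdistinct p q hpq (by rw [h, hapq])
      have hsub : ({l p, l q} : Finset V) ⊆ G.neighborFinset (a p) := by
        intro w hw
        simp only [Finset.mem_insert, Finset.mem_singleton] at hw
        rcases hw with rfl | rfl
        · exact (SimpleGraph.mem_neighborFinset _ _ _).mpr (hadj p).symm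
        · rw [hapq]; exact (SimpleGraph.mem_neighborFinset _ _ _).mpr (hadj q).symm
      have hc := Finset.card_le_card hsub
      rw [Finset.card_pair hlpq] at hc
      calc 2 ≤ (G.neighborFinset (a p)).card := hc
        _ = d := hreg (a p)
    · have hor : a p ≠ x ∨ a q ≠ x := by
        by_contra h
        push_neg at h
        exact hapq (h.1.trans h.2.symm)
      obtain ⟨r, hr, harx⟩ : ∃ r, r ∈ S ∧ a r ≠ x := by
        rcases hor with h | h
        exacts [⟨p, hp, h⟩, ⟨q, hq, h⟩]
      have hne : (⟨a r, ha r⟩ : ↥T') ≠ ⟨x, hx⟩ := fun he => harx (congrArg Subtype.val he)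
      obtain ⟨z, hadj', _, _⟩ := exists_pred G' hr.1 hne
      have hzadj : G.Adj (a r) z.val := hadj'
      have hzl : z.val ≠ l r := by
        intro h
        exact z.prop (by rw [h]; exact hl r)
      have hsub : ({z.val, l r} : Finset V) ⊆ G.neighborFinset (a r) := by
        intro w hw
        simp only [Finset.mem_insert, Finset.mem_singleton] at hw
        rcases hw with rfl | rfl
        · exact (SimpleGraph.mem_neighborFinset _ _ _).mpr hzadj
        · exact (SimpleGraph.mem_neighborFinset _ _ _).mpr (hadj r).symm
      have hc := Finset.card_le_card hsub
      rw [Finset.card_pair hzl] at hc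
      calc 2 ≤ (G.neighborFinset (a r)).card := hc
        _ = d := hreg (a r)
  -- the predecessor map
  set f : V → Sym2 V := fun v =>
    if h : v ∈ W ∧ v ≠ x then
      s(v, (exists_pred G' ((hWspec v h.1 (hWT v h.1)).1)
        (fun he => h.2 (congrArg Subtype.val he))).choose.val)
    else if h2 : G.Reachable v₀ v ∧ v ≠ v₀ then
      s(v, (exists_pred G h2.1 h2.2).choose)
    else s(v, v) with hfdef
  have hf1 : ∀ v (h : v ∈ W ∧ v ≠ x), ∃ z : ↥T',
      f v = s(v, z.val) ∧ G.Adj v z.val ∧ z.val ∈ W ∧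
      (∀ hv : v ∈ T', G'.dist ⟨x, hx⟩ z + 1 = G'.dist ⟨x, hx⟩ ⟨v, hv⟩) := by
    intro v h
    have hv := hWT v h.1
    obtain ⟨hadj', hreach', hdist'⟩ := (exists_pred G' ((hWspec v h.1 (hWT v h.1)).1)
        (fun he => h.2 (congrArg Subtype.val he))).choose_spec
    refine ⟨(exists_pred G' ((hWspec v h.1 (hWT v h.1)).1)
        (fun he => h.2 (congrArg Subtype.val he))).choose, ?_, hadj', ?_, ?_⟩
    · simp only [hfdef]
      rw [dif_pos h]
    · -- z.val ∈ W
      set z := (exists_pred G' ((hWspec v h.1 (hWT v h.1)).1)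
        (fun he => h.2 (congrArg Subtype.val he))).choose with hzdef
      obtain ⟨hXv, p, hp, hrv, hsum⟩ := hWspec v h.1 hv
      refine ⟨z.prop, p, hp, hreach', (hadj'.symm.reachable).trans hrv, ?_⟩
      have e1 : G'.dist ⟨x, hx⟩ z + 1 = G'.dist ⟨x, hx⟩ ⟨v, hv⟩ := hdist'
      have e2 : G'.dist z ⟨a p, ha p⟩ ≤ G'.dist z ⟨v, hv⟩ + G'.dist ⟨v, hv⟩ ⟨a p, ha p⟩ :=
        dist_triangle_reach hadj'.symm.reachable hrv
      have e3 : G'.dist z ⟨v, hv⟩ = 1 := SimpleGraph.dist_eq_one_iff_adj.mpr hadj'.symm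
      show G'.dist ⟨x, hx⟩ z + G'.dist z ⟨a p, ha p⟩ ≤ R / 2
      omega
    · intro hv'
      exact hdist'
  have hf2 : ∀ v, ¬(v ∈ W ∧ v ≠ x) → G.Reachable v₀ v → v ≠ v₀ → ∃ z : V,
      f v = s(v, z) ∧ G.Adj v z ∧ G.Reachable v₀ z ∧
      G.dist v₀ z + 1 = G.dist v₀ v := by
    intro v hnW hr hne
    refine ⟨(exists_pred G hr hne).choose, ?_, (exists_pred G hr hne).choose_spec.1,
      (exists_pred G hr hne).choose_spec.2.1, (exists_pred G hr hne).choose_spec.2.2⟩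
    simp only [hfdef]
    rw [dif_neg hnW, dif_pos (show G.Reachable v₀ v ∧ v ≠ v₀ from ⟨hr, hne⟩)]
  -- edge sets
  set EY : Set (Sym2 V) := {e : Sym2 V | e ∈ G.edgeSet ∧ ∀ w ∈ e, w ∈ Yset} with hEYdef
  set D : Set V := Yset \ {v₀, x} with hDdef
  have hDmem : ∀ v ∈ D, v ∈ Yset ∧ v ≠ v₀ ∧ v ≠ x := by
    rintro v ⟨h1, h2⟩
    simp only [Set.mem_insert_iff, Set.mem_singleton_iff] at h2
    push_neg at h2
    exact ⟨h1, h2.1, h2.2⟩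
  have hfY : ∀ v ∈ D, f v ∈ EY := by
    intro v hvD
    obtain ⟨hvY, hv0, hvx⟩ := hDmem v hvD
    by_cases hw : v ∈ W
    · obtain ⟨z, hfv, hadj', hzW, _⟩ := hf1 v ⟨hw, hvx⟩
      rw [hfv]
      refine ⟨(SimpleGraph.mem_edgeSet _).mpr hadj', ?_⟩
      intro w hw'
      rw [Sym2.mem_iff] at hw'
      rcases hw' with rfl | rfl
      · exact hvY
      · exact hWY _ hzW
    · obtain ⟨z, hfv, hadj', hzr, hzd⟩ := hf2 v (fun hc => hw hc.1) hvY.1 hv0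
      rw [hfv]
      refine ⟨(SimpleGraph.mem_edgeSet _).mpr hadj', ?_⟩
      intro w hw'
      rw [Sym2.mem_iff] at hw'
      rcases hw' with rfl | rfl
      · exact hvY
      · exact ⟨hzr, by have := hvY.2; omega⟩
  have hfInj : Set.InjOn f D := by
    intro u hu v hv huv
    obtain ⟨huY, hu0, hux⟩ := hDmem u hu
    obtain ⟨hvY, hv0, hvx⟩ := hDmem v hv
    by_contra hne
    by_cases hwu : u ∈ W <;> by_cases hwv : v ∈ W
    · obtain ⟨zu, hfu, hadju, hzuW, hdu⟩ := hf1 u ⟨hwu, hux⟩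
      obtain ⟨zv, hfv, hadjv, hzvW, hdv⟩ := hf1 v ⟨hwv, hvx⟩
      rw [hfu, hfv, Sym2.eq_iff] at huv
      rcases huv with ⟨h1, h2⟩ | ⟨h1, h2⟩
      · exact hne h1
      · have hu' := hWT u hwu
        have hv' := hWT v hwv
        have e1 := hdu hu'
        have e2 := hdv hv'
        have hzu : zu = ⟨v, hv'⟩ := Subtype.ext h2
        have hzv : zv = ⟨u, hu'⟩ := Subtype.ext h1.symm
        rw [hzu] at e1
        rw [hzv] at e2
        omega
    · obtain ⟨zu, hfu, hadju, hzuW, hdu⟩ := hf1 u ⟨hwu, hux⟩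
      obtain ⟨zv, hfv, _, _, _⟩ := hf2 v (fun hc => hwv hc.1) hvY.1 hv0
      rw [hfu, hfv, Sym2.eq_iff] at huv
      rcases huv with ⟨h1, h2⟩ | ⟨h1, h2⟩
      · exact hne h1
      · exact hwv (h2 ▸ hzuW)
    · obtain ⟨zu, hfu, _, _, _⟩ := hf2 u (fun hc => hwu hc.1) huY.1 hu0
      obtain ⟨zv, hfv, hadjv, hzvW, hdv⟩ := hf1 v ⟨hwv, hvx⟩
      rw [hfu, hfv, Sym2.eq_iff] at huv
      rcases huv with ⟨h1, h2⟩ | ⟨h1, h2⟩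
      · exact hne h1
      · exact hwu (h1.symm ▸ hzvW)
    · obtain ⟨zu, hfu, _, _, hdu⟩ := hf2 u (fun hc => hwu hc.1) huY.1 hu0
      obtain ⟨zv, hfv, _, _, hdv⟩ := hf2 v (fun hc => hwv hc.1) hvY.1 hv0
      rw [hfu, hfv, Sym2.eq_iff] at huv
      rcases huv with ⟨h1, h2⟩ | ⟨h1, h2⟩
      · exact hne h1
      · rw [h2] at hdu
        rw [← h1] at hdv
        omega
  have hfbd : ∀ v ∈ D, ∀ p ∈ S, f v ≠ s(l p, a p) := by
    intro v hvD p hp heq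
    obtain ⟨hvY, hv0, hvx⟩ := hDmem v hvD
    by_cases hw : v ∈ W
    · obtain ⟨z, hfv, _, hzW, _⟩ := hf1 v ⟨hw, hvx⟩
      rw [hfv, Sym2.eq_iff] at heq
      rcases heq with ⟨h1, h2⟩ | ⟨h1, h2⟩
      · exact (hWT v hw) (by rw [h1]; exact hl p)
      · exact z.prop (by rw [h2]; exact hl p)
    · obtain ⟨z, hfv, hadj', hzr, hzd⟩ := hf2 v (fun hc => hw hc.1) hvY.1 hv0
      rw [hfv, Sym2.eq_iff] at heq
      rcases heq with ⟨h1, h2⟩ | ⟨h1, h2⟩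
      · rw [h1] at hzd
        rw [h2] at hzd
        have := hl p
        exact ha p (by omega)
      · exact hw (h1.symm ▸ hWa p hp)
  have hbdY : ∀ p ∈ S, s(l p, a p) ∈ EY := by
    intro p hp
    refine ⟨(SimpleGraph.mem_edgeSet _).mpr (hadj p), ?_⟩
    intro w hw
    rw [Sym2.mem_iff] at hw
    rcases hw with rfl | rfl
    · exact ⟨hlr p, by have := hl p; omega⟩
    · exact ⟨har p, by have := hdva p; omega⟩
  have hbdInj : Set.InjOn (fun p => s(l p, a p)) S := by
    intro p hp q hq hpq
    by_contra hne
    exact hdistinct p q hne hpq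
  -- size of EY
  have hpairsub : ({v₀, x} : Set V) ⊆ Yset := by
    intro w hw
    rcases hw with rfl | hw
    · exact hv₀Y
    · rw [Set.mem_singleton_iff] at hw
      rw [hw]
      exact hxY
  have hDcard : D.ncard = Yset.ncard - 2 := by
    rw [hDdef, Set.ncard_diff hpairsub (Set.toFinite _), Set.ncard_pair (Ne.symm hxv₀)]
  have hY2 : 2 ≤ Yset.ncard := by
    calc 2 = ({v₀, x} : Set V).ncard := (Set.ncard_pair (Ne.symm hxv₀)).symm
      _ ≤ Yset.ncard := Set.ncard_le_ncard hpairsub (Set.toFinite _)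
  have hEYcard : Yset.ncard - 2 + S.ncard ≤ EY.ncard := by
    have hA1sub : f '' D ⊆ EY := by
      rintro e ⟨v, hv, rfl⟩
      exact hfY v hv
    have hA2sub : (fun p => s(l p, a p)) '' S ⊆ EY := by
      rintro e ⟨p, hp, rfl⟩
      exact hbdY p hp
    have hdisj : Disjoint (f '' D) ((fun p => s(l p, a p)) '' S) := by
      rw [Set.disjoint_left]
      rintro e ⟨v, hv, rfl⟩ ⟨p, hp, hpe⟩
      exact hfbd v hv p hp hpe.symm
    calc Yset.ncard - 2 + S.ncard
        = (f '' D).ncard + ((fun p => s(l p, a p)) '' S).ncard := by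
          rw [Set.ncard_image_of_injOn hfInj, Set.ncard_image_of_injOn hbdInj, hDcard]
      _ = (f '' D ∪ (fun p => s(l p, a p)) '' S).ncard :=
          (Set.ncard_union_eq hdisj (Set.toFinite _) (Set.toFinite _)).symm
      _ ≤ EY.ncard := Set.ncard_le_ncard (Set.union_subset hA1sub hA2sub) (Set.toFinite _)
  -- the unreachable part
  set GU : SimpleGraph V :=
    { Adj := fun u w => G.Adj u w ∧ ¬G.Reachable v₀ u ∧ ¬G.Reachable v₀ w,
      symm := ⟨fun u w h => ⟨h.1.symm, h.2.2, h.2.1⟩⟩,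
      loopless := ⟨fun u h => G.loopless.irrefl u h.1⟩ } with hGUdef
  have hEUcard : U.ncard ≤ GU.edgeSet.ncard := by
    have hnbr : ∀ v : V, ¬G.Reachable v₀ v → GU.neighborFinset v = G.neighborFinset v := by
      intro v hv
      ext w
      simp only [SimpleGraph.mem_neighborFinset]
      constructor
      · intro h
        exact h.1
      · intro h
        exact ⟨h, hv, fun hr => hv (hr.trans h.symm.reachable)⟩
    have hdegU : ∀ v : V, ¬G.Reachable v₀ v → GU.degree v = d := by
      intro v hv
      have h1 : GU.degree v = (GU.neighborFinset v).card := rfl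
      rw [h1, hnbr v hv]
      exact hreg v
    have hsum := GU.sum_degrees_eq_twice_card_edges
    set UF : Finset V := Finset.univ.filter (· ∈ U) with hUFdef
    have hcount : UF.card * d ≤ ∑ v : V, GU.degree v := by
      have h1 : ∑ v ∈ UF, GU.degree v ≤ ∑ v : V, GU.degree v :=
        Finset.sum_le_sum_of_subset (Finset.subset_univ _)
      have hmem : ∀ v ∈ UF, GU.degree v = d := by
        intro v hv
        rw [hUFdef] at hv
        exact hdegU v (Finset.mem_filter.mp hv).2
      have ho : ∑ v ∈ UF, GU.degree v = UF.card * d := by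
        calc ∑ v ∈ UF, GU.degree v = ∑ _v ∈ UF, d := Finset.sum_congr rfl hmem
          _ = UF.card * d := by rw [Finset.sum_const, smul_eq_mul]
      omega
    have hUcard : U.ncard = UF.card := by
      rw [← Set.ncard_coe_finset]
      congr 1
      ext v
      simp [hUFdef]
    have hedge : GU.edgeSet.ncard = GU.edgeFinset.card := by
      rw [← SimpleGraph.coe_edgeFinset, Set.ncard_coe_finset]
    have hmul : UF.card * 2 ≤ UF.card * d := Nat.mul_le_mul_left _ hd2
    omega
  -- ball edges
  set EB : Set (Sym2 V) := {e : Sym2 V | e ∈ G.edgeSet ∧ ∀ w ∈ e, G.dist v₀ w ≤ R}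
    with hEBdef
  have hEBcard : EB.ncard = (G.induce {v : V | G.dist v₀ v ≤ R}).edgeSet.ncard := by
    have himg : Sym2.map (Subtype.val) '' (G.induce {v : V | G.dist v₀ v ≤ R}).edgeSet = EB := by
      ext e
      constructor
      · rintro ⟨e', he', rfl⟩
        revert he'
        induction e' using Sym2.ind with
        | _ u w =>
          intro he'
          refine ⟨(SimpleGraph.mem_edgeSet _).mpr he', ?_⟩
          intro z hz
          rw [Sym2.map_pair_eq, Sym2.mem_iff] at hz
          rcases hz with rfl | rfl
          · exact u.prop
          · exact w.prop
      · intro he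
        revert he
        induction e using Sym2.ind with
        | _ u w =>
          intro he
          obtain ⟨h1, h2⟩ := he
          have hu : G.dist v₀ u ≤ R := h2 u (by simp)
          have hw : G.dist v₀ w ≤ R := h2 w (by simp)
          exact ⟨s(⟨u, hu⟩, ⟨w, hw⟩), (SimpleGraph.mem_edgeSet _).mpr h1, by rw [Sym2.map_pair_eq]⟩
    rw [← himg, Set.ncard_image_of_injective _ (Sym2.map.injective Subtype.val_injective)]
  have hEYsub : EY ⊆ EB := by
    intro e he
    exact ⟨he.1, fun w hw => (he.2 w hw).2⟩
  have hEUsub : GU.edgeSet ⊆ EB := by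
    intro e
    induction e using Sym2.ind with
    | _ u w =>
      intro he
      rw [SimpleGraph.mem_edgeSet] at he
      refine ⟨(SimpleGraph.mem_edgeSet _).mpr he.1, ?_⟩
      intro z hz
      rw [Sym2.mem_iff] at hz
      rcases hz with rfl | rfl
      · rw [SimpleGraph.dist_eq_zero_of_not_reachable he.2.1]
        exact Nat.zero_le R
      · rw [SimpleGraph.dist_eq_zero_of_not_reachable he.2.2]
        exact Nat.zero_le R
  have hdisjYU : Disjoint EY GU.edgeSet := by
    rw [Set.disjoint_left]
    intro e
    induction e using Sym2.ind with
    | _ u w =>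
      intro he1 he2
      rw [SimpleGraph.mem_edgeSet] at he2
      exact he2.2.1 (he1.2 u (by simp)).1
  have hEBge : EY.ncard + GU.edgeSet.ncard ≤ EB.ncard := by
    rw [← Set.ncard_union_eq hdisjYU (Set.toFinite _) (Set.toFinite _)]
    exact Set.ncard_le_ncard (Set.union_subset hEYsub hEUsub) (Set.toFinite _)
  -- vertex count
  have hPcard : ({v : V | G.dist v₀ v ≤ R} : Set V).ncard = Yset.ncard + U.ncard := by
    have hunion : {v : V | G.dist v₀ v ≤ R} = Yset ∪ U := by
      ext v
      simp only [Set.mem_setOf_eq, Set.mem_union, hYdef, hUdef]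
      constructor
      · intro h
        by_cases hr : G.Reachable v₀ v
        · exact Or.inl ⟨hr, h⟩
        · exact Or.inr hr
      · rintro (⟨_, h⟩ | h)
        · exact h
        · rw [SimpleGraph.dist_eq_zero_of_not_reachable h]
          exact Nat.zero_le R
    have hdisj : Disjoint Yset U := by
      rw [Set.disjoint_left]
      rintro v ⟨hr, _⟩ hv
      exact hv hr
    rw [hunion, Set.ncard_union_eq hdisj (Set.toFinite _) (Set.toFinite _)]
  -- final arithmetic
  have h1 : (ω : ℤ) + 2 ≤ (S.ncard : ℤ) := by exact_mod_cast hk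
  have h2 := hball
  rw [← hEBcard, hPcard] at h2
  have h3 : (Yset.ncard : ℤ) - 2 + S.ncard + U.ncard ≤ (EB.ncard : ℤ) := by
    have := hEYcard
    have := hEBge
    have := hY2
    omega
  omega
end

section
/- Let B be a finite connected graph of excess at most ω with vertex set containing a ball structure, and let U be a subset of k vertices of the inner ball. Removing U from B yields a graph B^(U) whose deficit function g(v) = (number of removed edges at v) satisfies: on every connected component of B^(U), the sum of g over the component is at most ω + k. -/
open BigOperators
open Finset

section AuxDeficit

lemma walk_exists_last {V : Type*} {G : SimpleGraph V} {a b : V} (w : G.Walk a b)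
    (hw : 0 < w.length) : ∃ y, G.Adj y b ∧ ∃ w' : G.Walk a y, w'.length + 1 = w.length := by
  induction w with
  | nil => simp at hw
  | @cons u c b h p ih =>
    cases p with
    | nil => exact ⟨u, h, SimpleGraph.Walk.nil, by simp⟩
    | cons h2 q =>
      obtain ⟨y, hy, w', hl⟩ := ih (by simp)
      exact ⟨y, hy, SimpleGraph.Walk.cons h w', by simp [SimpleGraph.Walk.length_cons, ← hl]⟩

/-- If every vertex is reachable from the set `R`, then `|V| ≤ #edges + |R|`. -/
lemma card_le_edges_add_of_reachable {V : Type*} [Fintype V] [DecidableEq V]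
    (G : SimpleGraph V) [DecidableRel G.Adj] (R : Finset V)
    (h : ∀ x : V, ∃ r ∈ R, G.Reachable r x) :
    Fintype.card V ≤ G.edgeFinset.card + R.card := by
  classical
  set d : V → ℕ := fun x => sInf {n | ∃ r ∈ R, ∃ w : G.Walk r x, w.length = n} with hd
  have hmem : ∀ x, ∃ r ∈ R, ∃ w : G.Walk r x, w.length = d x := by
    intro x
    have : d x ∈ {n | ∃ r ∈ R, ∃ w : G.Walk r x, w.length = n} := by
      apply Nat.sInf_mem
      obtain ⟨r, hr, hre⟩ := h x
      obtain ⟨w⟩ := hre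
      exact ⟨w.length, r, hr, w, rfl⟩
    exact this
  have hstep : ∀ x, x ∉ R → ∃ y, G.Adj y x ∧ d y < d x := by
    intro x hx
    obtain ⟨r, hr, w, hw⟩ := hmem x
    have hpos : 0 < w.length := by
      rcases Nat.eq_zero_or_pos w.length with h0 | h0
      · exact absurd (SimpleGraph.Walk.eq_of_length_eq_zero h0 ▸ hr) hx
      · exact h0
    obtain ⟨y, hy, w', hl⟩ := walk_exists_last w hpos
    refine ⟨y, hy, ?_⟩
    have : d y ≤ w'.length := Nat.sInf_le ⟨r, hr, w', rfl⟩
    omega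
  have hstep' : ∀ x : V, ∃ y, x ∉ R → G.Adj y x ∧ d y < d x := by
    intro x
    by_cases hx : x ∈ R
    · exact ⟨x, fun h => absurd hx h⟩
    · obtain ⟨y, h1, h2⟩ := hstep x hx
      exact ⟨y, fun _ => ⟨h1, h2⟩⟩
  choose f hf using hstep'
  have key : (Finset.univ \ R).card ≤ G.edgeFinset.card := by
    apply Finset.card_le_card_of_injOn (fun x => s(f x, x))
    · intro x hx
      simp only [Finset.coe_sdiff, Set.mem_diff, Finset.mem_coe, Finset.mem_sdiff] at hx ⊢
      rw [SimpleGraph.mem_edgeFinset, SimpleGraph.mem_edgeSet]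
      exact (hf x hx.2).1
    · intro a ha b hb hab
      simp only [Finset.coe_sdiff, Set.mem_diff, Finset.mem_coe] at ha hb
      rw [Sym2.eq_iff] at hab
      rcases hab with ⟨-, h⟩ | ⟨h1, h2⟩
      · exact h
      · have da := (hf a ha.2).2
        have db := (hf b hb.2).2
        rw [h1] at da
        rw [← h2] at db
        omega
  have : (Finset.univ \ R).card + R.card = Fintype.card V := by
    rw [Finset.card_sdiff_add_card_eq_card (Finset.subset_univ R), Finset.card_univ]
  omega

end AuxDeficit

/-- The graph obtained from `B` by deleting the vertices in `U` (kept as isolated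
vertices; no edge touches `U`). -/
def SimpleGraph.deleteVertexSet {V : Type*} (B : SimpleGraph V) (U : Set V) :
    SimpleGraph V where
  Adj x y := B.Adj x y ∧ x ∉ U ∧ y ∉ U
  symm := by
    constructor
    intro x y h
    exact ⟨h.1.symm, h.2.2, h.2.1⟩
  loopless := by
    constructor
    intro x h
    exact B.irrefl h.1

/-- Deficit sum bound: let `B` be a finite connected graph with excess at most `ω`
and `U` a set of `k` vertices. Removing `U` yields the graph `B⁽ᵁ⁾`, and the deficit
`g(v)` of a remaining vertex `v` (the number of edges from `v` into `U`) satisfies: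
on every connected component `S` of `B⁽ᵁ⁾` (the component of a vertex `v ∉ U`),
`∑_{x ∈ S} g(x) ≤ ω + k`. -/
theorem deficit_sum_bound {V : Type*} [Fintype V] [DecidableEq V]
    (B : SimpleGraph V) [DecidableRel B.Adj] (ω : ℕ)
    (hconn : B.Connected)
    (hexc : (B.edgeSet.ncard : ℤ) ≤ (Fintype.card V : ℤ) - 1 + (ω : ℤ))
    (U : Finset V) (k : ℕ) (hk : U.card = k)
    (v : V) (hv : v ∉ U)
    (S : Set V)
    (hS : S = {w : V | (SimpleGraph.deleteVertexSet B (↑U : Set V)).Reachable v w}) :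
    ∑ x ∈ (Set.toFinite S).toFinset, (U.filter (fun u => B.Adj x u)).card ≤ ω + k := by
  classical
  set Sfin := (Set.toFinite S).toFinset with hSfin
  set D := SimpleGraph.deleteVertexSet B (↑U : Set V) with hDdef
  have hvS : v ∈ S := by rw [hS]; exact SimpleGraph.Reachable.refl v
  have hSU : ∀ x ∈ S, x ∉ U := by
    have hwalk : ∀ (a b : V) (_ : D.Walk a b), a ∉ (↑U : Set V) → b ∉ (↑U : Set V) := by
      intro a b w
      induction w with
      | nil => exact id
      | cons h p ih => exact fun _ => ih h.2.2
    intro x hx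
    rw [hS] at hx
    obtain ⟨w⟩ := hx
    exact fun hxU => hwalk v x w (by simpa using hv) (by simpa using hxU)
  -- the auxiliary graph: B minus the edges between S and U
  set G' : SimpleGraph V :=
    { Adj := fun x y => B.Adj x y ∧ ¬(x ∈ S ∧ y ∈ U) ∧ ¬(y ∈ S ∧ x ∈ U)
      symm := ⟨fun x y h => ⟨h.1.symm, h.2.2, h.2.1⟩⟩
      loopless := ⟨fun x h => B.irrefl h.1⟩ } with hG'def
  have hmono : D ≤ G' := by
    intro x y h
    refine ⟨h.1, fun hc => ?_, fun hc => ?_⟩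
    · exact h.2.2 (by simpa using hc.2)
    · exact h.2.1 (by simpa using hc.2)
  have hreach : ∀ x : V, ∃ r ∈ insert v U, G'.Reachable r x := by
    have hwalk : ∀ (a b : V) (_ : B.Walk a b),
        (∃ r ∈ insert v U, G'.Reachable r a) → ∃ r ∈ insert v U, G'.Reachable r b := by
      intro a b w
      induction w with
      | nil => exact id
      | @cons a c b h p ih =>
        intro ha
        apply ih
        by_cases hkeep : G'.Adj a c
        · obtain ⟨r, hr, hra⟩ := ha
          exact ⟨r, hr, hra.trans hkeep.reachable⟩
        · have hdel : (a ∈ S ∧ c ∈ U) ∨ (c ∈ S ∧ a ∈ U) := by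
            by_contra hcon
            push_neg at hcon
            exact hkeep ⟨h, fun hc => hcon.1 hc.1 hc.2, fun hc => hcon.2 hc.1 hc.2⟩
          rcases hdel with ⟨-, hcU⟩ | ⟨hcS, -⟩
          · exact ⟨c, Finset.mem_insert_of_mem hcU, SimpleGraph.Reachable.refl c⟩
          · refine ⟨v, Finset.mem_insert_self v U, ?_⟩
            have : D.Reachable v c := by rw [hS] at hcS; exact hcS
            exact this.mono hmono
    intro x
    obtain ⟨w⟩ := hconn.preconnected v x
    exact hwalk v x w ⟨v, Finset.mem_insert_self v U, SimpleGraph.Reachable.refl v⟩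
  have hA : Fintype.card V ≤ G'.edgeFinset.card + (k + 1) := by
    have := card_le_edges_add_of_reachable G' (insert v U) hreach
    rwa [Finset.card_insert_of_notMem hv, hk] at this
  -- edge counting via ordered pairs
  have hBpairs : 2 * B.edgeFinset.card = #(univ.filter fun (p : V × V) => B.Adj p.1 p.2) := by
    have := B.two_mul_card_edgeFinset
    convert this using 2
  have hGpairs : 2 * G'.edgeFinset.card = #(univ.filter fun (p : V × V) => G'.Adj p.1 p.2) := by
    have := G'.two_mul_card_edgeFinset
    convert this using 2
  have hsplit : #(univ.filter fun (p : V × V) => B.Adj p.1 p.2) =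
      #(univ.filter fun (p : V × V) => G'.Adj p.1 p.2) +
      #(univ.filter fun (p : V × V) => B.Adj p.1 p.2 ∧
        ((p.1 ∈ S ∧ p.2 ∈ U) ∨ (p.2 ∈ S ∧ p.1 ∈ U))) := by
    have h1 : (univ.filter fun (p : V × V) => G'.Adj p.1 p.2) =
        (univ.filter fun (p : V × V) => B.Adj p.1 p.2 ∧
          ¬((p.1 ∈ S ∧ p.2 ∈ U) ∨ (p.2 ∈ S ∧ p.1 ∈ U))) := by
      apply Finset.filter_congr
      intro p _
      constructor
      · rintro ⟨h, h2, h3⟩; exact ⟨h, by tauto⟩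
      · rintro ⟨h, h2⟩; exact ⟨h, by tauto, by tauto⟩
    rw [h1]
    rw [← Finset.filter_filter, ← Finset.filter_filter, add_comm]
    exact (Finset.card_filter_add_card_filter_not
      (fun (p : V × V) => (p.1 ∈ S ∧ p.2 ∈ U) ∨ (p.2 ∈ S ∧ p.1 ∈ U))).symm
  have cswap : #(univ.filter fun (p : V × V) => B.Adj p.1 p.2 ∧ p.2 ∈ S ∧ p.1 ∈ U) =
      #(univ.filter fun (p : V × V) => B.Adj p.1 p.2 ∧ p.1 ∈ S ∧ p.2 ∈ U) := by
    apply Finset.card_bij' (fun (p : V × V) _ => p.swap) (fun (p : V × V) _ => p.swap)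
    · intro p hp
      simp only [Finset.mem_filter, Finset.mem_univ, true_and, Prod.fst_swap,
        Prod.snd_swap] at hp ⊢
      exact ⟨hp.1.symm, hp.2⟩
    · intro p hp
      simp only [Finset.mem_filter, Finset.mem_univ, true_and, Prod.fst_swap,
        Prod.snd_swap] at hp ⊢
      exact ⟨hp.1.symm, hp.2⟩
    · intro p _; simp
    · intro p _; simp
  have hunion : (univ.filter fun (p : V × V) => B.Adj p.1 p.2 ∧
        ((p.1 ∈ S ∧ p.2 ∈ U) ∨ (p.2 ∈ S ∧ p.1 ∈ U))) =
      (univ.filter fun (p : V × V) => B.Adj p.1 p.2 ∧ p.1 ∈ S ∧ p.2 ∈ U) ∪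
      (univ.filter fun (p : V × V) => B.Adj p.1 p.2 ∧ p.2 ∈ S ∧ p.1 ∈ U) := by
    ext p
    simp only [Finset.mem_filter, Finset.mem_union, Finset.mem_univ, true_and]
    tauto
  have hdisj : Disjoint
      (univ.filter fun (p : V × V) => B.Adj p.1 p.2 ∧ p.1 ∈ S ∧ p.2 ∈ U)
      (univ.filter fun (p : V × V) => B.Adj p.1 p.2 ∧ p.2 ∈ S ∧ p.1 ∈ U) := by
    rw [Finset.disjoint_left]
    intro p hp1 hp2
    simp only [Finset.mem_filter, Finset.mem_univ, true_and] at hp1 hp2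
    exact hSU _ hp1.2.1 hp2.2.2
  have c1 : #(univ.filter fun (p : V × V) => B.Adj p.1 p.2 ∧ p.1 ∈ S ∧ p.2 ∈ U) =
      ∑ x ∈ Sfin, (U.filter fun u => B.Adj x u).card := by
    rw [Finset.card_filter, Fintype.sum_prod_type]
    have hin : ∀ x : V, (∑ y : V, if B.Adj x y ∧ x ∈ S ∧ y ∈ U then (1 : ℕ) else 0) =
        if x ∈ Sfin then (U.filter fun u => B.Adj x u).card else 0 := by
      intro x
      by_cases hx : x ∈ S
      · have hx' : x ∈ Sfin := by rw [hSfin, Set.Finite.mem_toFinset]; exact hx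
        rw [if_pos hx']
        have hterm : ∀ y : V, (if B.Adj x y ∧ x ∈ S ∧ y ∈ U then (1 : ℕ) else 0) =
            if y ∈ U then (if B.Adj x y then 1 else 0) else 0 := by
          intro y
          by_cases h1 : B.Adj x y <;> by_cases h2 : y ∈ U <;> simp [h1, h2, hx]
        rw [Finset.sum_congr rfl fun y _ => hterm y, Finset.sum_ite_mem,
          Finset.univ_inter, Finset.card_filter]
      · have hx' : x ∉ Sfin := by rw [hSfin, Set.Finite.mem_toFinset]; exact hx
        rw [if_neg hx']
        apply Finset.sum_eq_zero
        intro y _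
        simp [hx]
    rw [Finset.sum_congr rfl fun x _ => hin x, Finset.sum_ite_mem, Finset.univ_inter]
  have hdelcard : #(univ.filter fun (p : V × V) => B.Adj p.1 p.2 ∧
        ((p.1 ∈ S ∧ p.2 ∈ U) ∨ (p.2 ∈ S ∧ p.1 ∈ U))) =
      2 * ∑ x ∈ Sfin, (U.filter fun u => B.Adj x u).card := by
    rw [hunion, Finset.card_union_of_disjoint hdisj, c1, cswap, c1]
    ring
  have hncard : B.edgeSet.ncard = B.edgeFinset.card := by
    rw [SimpleGraph.edgeFinset]
    exact Set.ncard_eq_toFinset_card' _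
  rw [hncard] at hexc
  omega
end

section
/- If G is a graph and G̃ is a covering of G with covering map π (a graph homomorphism that is a local bijection on neighborhoods), and if for a vertex x of G̃ with π(x) = i the family (G̃_{xy})_y is absolutely summable over each fiber, then the Green's functions of the normalized adjacency operators satisfy G_{ij}(z) = Σ_{y : π(y)=j} G̃_{xy}(z) for all vertices j of G and z ∈ ℂ₊. -/
open BigOperators Matrix

private lemma summable_sigma_fintype {β : Type*} [Fintype β] {γ : β → Type*}
    {f : (Σ b, γ b) → ℂ} (h : ∀ b, Summable fun c => ‖f ⟨b, c⟩‖) : Summable f := by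
  apply Summable.of_norm
  rw [summable_sigma_of_nonneg (fun _ => norm_nonneg _)]
  exact ⟨h, Summable.of_finite⟩

/-- Green's function of a covering: let `π : W → V` be a surjective covering map from a
(possibly infinite, locally finite) graph `G'` onto a finite simple graph `G` with
degrees at most `d` (i.e. `π` maps each vertex neighborhood bijectively onto the image
neighborhood), let `Gf = (H - z)⁻¹` be the Green's function of the normalized adjacency
matrix `H = A/√(d-1)` of `G`, and let `Gt` be a Green's function of `G'`, i.e. a
solution of the resolvent recursion whose rows are absolutely summable on every fiber
of `π`. Then for `x ∈ W` with `π x = i`, `Gf i j = ∑_{y : π y = j} Gt x y` for all `j`. -/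
theorem covering_green_function {V W : Type*} [Fintype V] [DecidableEq V]
    (G : SimpleGraph V) [DecidableRel G.Adj]
    (G' : SimpleGraph W) [∀ w, Fintype (G'.neighborSet w)] [DecidableEq W]
    (d : ℕ) (hd : 2 ≤ d) (hdeg : ∀ v, G.degree v ≤ d)
    (π : W → V) (hsurj : Function.Surjective π)
    (hcov : ∀ w : W, Set.BijOn π (G'.neighborSet w) (G.neighborSet (π w)))
    (z : ℂ) (hz : 0 < z.im)
    (Gf : Matrix V V ℂ)
    (hGf : Gf = (((Real.sqrt ((d : ℝ) - 1) : ℂ))⁻¹ • (G.adjMatrix ℂ)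
        - z • (1 : Matrix V V ℂ))⁻¹)
    (Gt : W → W → ℂ)
    (hrec : ∀ x y : W,
      ((Real.sqrt ((d : ℝ) - 1) : ℂ))⁻¹ * (∑ k ∈ G'.neighborFinset y, Gt x k) - z * Gt x y
        = if x = y then 1 else 0)
    (hsum : ∀ (x : W) (j : V),
      Summable (fun y : {y : W // π y = j} => ‖Gt x (y : W)‖))
    (x : W) (i : V) (hx : π x = i) :
    ∀ j : V, Gf i j = ∑' y : {y : W // π y = j}, Gt x (y : W) := by
  classical
  set c : ℂ := ((Real.sqrt ((d : ℝ) - 1) : ℂ))⁻¹ with hc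
  set A : Matrix V V ℂ := G.adjMatrix ℂ with hA
  set M : Matrix V V ℂ := c • A - z • (1 : Matrix V V ℂ) with hM
  have hAconj : ∀ a b, (starRingEnd ℂ) (A a b) = A a b := by
    intro a b
    simp only [hA, SimpleGraph.adjMatrix_apply]
    split <;> simp
  have hAsymm : ∀ a b, A a b = A b a := by
    intro a b
    simp [hA, SimpleGraph.adjMatrix_apply, G.adj_comm]
  have hcim : c.im = 0 := by
    rw [hc, ← Complex.ofReal_inv]
    exact Complex.ofReal_im _
  -- M is invertible
  have hdet : M.det ≠ 0 := by
    intro h0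
    obtain ⟨v, hv, hMv⟩ := Matrix.exists_mulVec_eq_zero_iff.mpr h0
    set Q : ℂ := ∑ a, (starRingEnd ℂ) (v a) * (A *ᵥ v) a with hQdef
    set R : ℂ := ∑ a, (starRingEnd ℂ) (v a) * v a with hRdef
    have hQ : (starRingEnd ℂ) Q = Q := by
      have h1 : (starRingEnd ℂ) Q = ∑ a, ∑ b, v a * (A a b * (starRingEnd ℂ) (v b)) := by
        simp [hQdef, Matrix.mulVec, dotProduct, map_sum, _root_.map_mul, hAconj,
          Finset.mul_sum, Complex.conj_conj]
      have h2 : Q = ∑ a, ∑ b, (starRingEnd ℂ) (v a) * (A a b * v b) := by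
        simp [hQdef, Matrix.mulVec, dotProduct, Finset.mul_sum]
      rw [h1, h2, Finset.sum_comm]
      refine Finset.sum_congr rfl fun a _ => Finset.sum_congr rfl fun b _ => ?_
      rw [hAsymm b a]; ring
    have hQim : Q.im = 0 := Complex.conj_eq_iff_im.mp hQ
    have key : c * Q = z * R := by
      have h0' : ∑ a, (starRingEnd ℂ) (v a) * (M *ᵥ v) a = 0 := by
        rw [hMv]; simp
      have hexp : ∀ a, (M *ᵥ v) a = c * (A *ᵥ v) a - z * v a := by
        intro a
        rw [hM, Matrix.sub_mulVec, Matrix.smul_mulVec, Matrix.smul_mulVec,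
          Matrix.one_mulVec]
        simp
      have hsplit : (∑ a, (starRingEnd ℂ) (v a) * (c * (A *ᵥ v) a))
          - ∑ a, (starRingEnd ℂ) (v a) * (z * v a) = 0 := by
        rw [← Finset.sum_sub_distrib, ← h0']
        exact Finset.sum_congr rfl fun a _ => by rw [hexp a]; ring
      have hcQ : ∑ a, (starRingEnd ℂ) (v a) * (c * (A *ᵥ v) a) = c * Q := by
        rw [hQdef, Finset.mul_sum]
        exact Finset.sum_congr rfl fun a _ => by ring
      have hzR : ∑ a, (starRingEnd ℂ) (v a) * (z * v a) = z * R := by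
        rw [hRdef, Finset.mul_sum]
        exact Finset.sum_congr rfl fun a _ => by ring
      rw [hcQ, hzR] at hsplit
      linear_combination hsplit
    set r : ℝ := ∑ a, Complex.normSq (v a) with hrdef
    have hR : R = (r : ℂ) := by
      rw [hRdef, hrdef, Complex.ofReal_sum]
      exact Finset.sum_congr rfl fun a _ =>
        (Complex.normSq_eq_conj_mul_self (z := v a)).symm
    have him : z.im * r = 0 := by
      have := congrArg Complex.im key
      rw [hR] at this
      simpa [Complex.mul_im, hcim, hQim] using this.symm
    have hr : r = 0 := by
      rcases mul_eq_zero.mp him with h | h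
      · exact absurd h hz.ne'
      · exact h
    have hall : ∀ a ∈ Finset.univ, Complex.normSq (v a) = 0 := by
      rw [← Finset.sum_eq_zero_iff_of_nonneg (fun a _ => Complex.normSq_nonneg (v a))]
      exact hr
    exact hv (funext fun a => Complex.normSq_eq_zero.mp (hall a (Finset.mem_univ a)))
  have hU : IsUnit M.det := isUnit_iff_ne_zero.mpr hdet
  have hMT : Mᵀ = M := by
    rw [hM]
    simp [Matrix.transpose_sub, Matrix.transpose_smul, hA, SimpleGraph.transpose_adjMatrix]
  -- the candidate vector
  set F : V → ℂ := fun l => ∑' y : {y : W // π y = l}, Gt x (y : W) with hF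
  have hGsum : ∀ l, Summable (fun y : {y : W // π y = l} => Gt x (y : W)) := by
    intro l
    exact Summable.of_norm (by simpa using hsum x l)
  -- key identity
  have hkey : ∀ j : V, c * (∑ l ∈ G.neighborFinset j, F l) - z * F j
      = if i = j then 1 else 0 := by
    intro j
    obtain ⟨e2, hE2⟩ : ∃ e : (Σ l : {l : V // l ∈ G.neighborFinset j},
        {y : W // π y = (l : V)}) ≃ {k : W // G.Adj j (π k)},
        ∀ p, ((e p : W)) = (p.2 : W) := by
      have hbij : Function.Bijective (fun p : Σ l : {l : V // l ∈ G.neighborFinset j},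
          {y : W // π y = (l : V)} => (⟨(p.2 : W), by
            have h1 : (p.1 : V) ∈ G.neighborFinset j := p.1.2
            rw [SimpleGraph.mem_neighborFinset] at h1
            rw [p.2.2]; exact h1⟩ : {k : W // G.Adj j (π k)})) := by
        constructor
        · rintro ⟨⟨l, hl⟩, ⟨k, hk⟩⟩ ⟨⟨l', hl'⟩, ⟨k', hk'⟩⟩ hpq
          have hkk : k = k' := congrArg Subtype.val hpq
          subst hkk
          have hll : l = l' := hk.symm.trans hk'
          subst hll
          rfl
        · rintro ⟨k, hkj⟩
          exact ⟨⟨⟨π k, by rwa [SimpleGraph.mem_neighborFinset]⟩, ⟨k, rfl⟩⟩, rfl⟩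
      exact ⟨Equiv.ofBijective _ hbij, fun p => rfl⟩
    obtain ⟨e1, hE1⟩ : ∃ e : (Σ y : {y : W // π y = j},
        {k : W // k ∈ G'.neighborFinset (y : W)}) ≃ {k : W // G.Adj j (π k)},
        ∀ p, ((e p : W)) = (p.2 : W) := by
      have hbij : Function.Bijective (fun p : Σ y : {y : W // π y = j},
          {k : W // k ∈ G'.neighborFinset (y : W)} => (⟨(p.2 : W), by
            have h1 : (p.2 : W) ∈ G'.neighborSet (p.1 : W) := by
              have := p.2.2
              rw [SimpleGraph.mem_neighborFinset] at this
              exact this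
            have h2 := (hcov (p.1 : W)).mapsTo h1
            rw [p.1.2] at h2
            exact h2⟩ : {k : W // G.Adj j (π k)})) := by
        constructor
        · rintro ⟨⟨y, hy⟩, ⟨k, hk⟩⟩ ⟨⟨y', hy'⟩, ⟨k', hk'⟩⟩ hpq
          have hkk : k = k' := congrArg Subtype.val hpq
          subst hkk
          have hyk : y ∈ G'.neighborSet k := by
            rw [SimpleGraph.mem_neighborFinset] at hk
            exact hk.symm
          have hyk' : y' ∈ G'.neighborSet k := by
            rw [SimpleGraph.mem_neighborFinset] at hk'
            exact hk'.symm
          have hyy : y = y' := (hcov k).injOn hyk hyk' (hy.trans hy'.symm)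
          subst hyy
          rfl
        · rintro ⟨k, hkj⟩
          have hj : j ∈ G.neighborSet (π k) := hkj.symm
          obtain ⟨y, hy1, hy2⟩ := (hcov k).surjOn hj
          refine ⟨⟨⟨y, hy2⟩, ⟨k, ?_⟩⟩, rfl⟩
          rw [SimpleGraph.mem_neighborFinset]
          exact (hy1 : G'.Adj k y).symm
      exact ⟨Equiv.ofBijective _ hbij, fun p => rfl⟩
    -- summability
    have h2 : Summable (fun p : Σ l : {l : V // l ∈ G.neighborFinset j},
        {y : W // π y = (l : V)} => Gt x (p.2 : W)) := by
      apply summable_sigma_fintype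
      intro l
      simpa using hsum x (l : V)
    have hT : Summable (fun k : {k : W // G.Adj j (π k)} => Gt x (k : W)) := by
      rw [← Equiv.summable_iff e2]
      simpa only [Function.comp_def, hE2] using h2
    have h1 : Summable (fun p : Σ y : {y : W // π y = j},
        {k : W // k ∈ G'.neighborFinset (y : W)} => Gt x (p.2 : W)) := by
      have := (Equiv.summable_iff e1).mpr hT
      simpa only [Function.comp_def, hE1] using this
    -- tsum identities
    have tA : ∑ l ∈ G.neighborFinset j, F l
        = ∑' k : {k : W // G.Adj j (π k)}, Gt x (k : W) := by
      calc ∑ l ∈ G.neighborFinset j, F l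
          = ∑ l : {l : V // l ∈ G.neighborFinset j}, F (l : V) :=
            (Finset.sum_coe_sort (G.neighborFinset j) F).symm
        _ = ∑' l : {l : V // l ∈ G.neighborFinset j}, F (l : V) := (tsum_fintype _).symm
        _ = ∑' l : {l : V // l ∈ G.neighborFinset j},
              ∑' y : {y : W // π y = (l : V)}, Gt x (y : W) := by simp only [hF]
        _ = ∑' p : (Σ l : {l : V // l ∈ G.neighborFinset j}, {y : W // π y = (l : V)}),
              Gt x (p.2 : W) := (Summable.tsum_sigma h2).symm
        _ = ∑' p : (Σ l : {l : V // l ∈ G.neighborFinset j}, {y : W // π y = (l : V)}),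
              Gt x ((e2 p : W)) := tsum_congr fun p => by rw [hE2]
        _ = ∑' k : {k : W // G.Adj j (π k)}, Gt x (k : W) :=
            e2.tsum_eq (fun k : {k : W // G.Adj j (π k)} => Gt x (k : W))
    have hS : Summable (fun y : {y : W // π y = j} =>
        ∑ k ∈ G'.neighborFinset (y : W), Gt x k) := by
      have := h1.sigma
      refine (summable_congr fun y => ?_).mp this
      exact Finset.tsum_subtype (G'.neighborFinset (y : W)) (Gt x)
    have tB : (∑' k : {k : W // G.Adj j (π k)}, Gt x (k : W))
        = ∑' y : {y : W // π y = j}, ∑ k ∈ G'.neighborFinset (y : W), Gt x k := by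
      calc (∑' k : {k : W // G.Adj j (π k)}, Gt x (k : W))
          = ∑' p : (Σ y : {y : W // π y = j}, {k : W // k ∈ G'.neighborFinset (y : W)}),
              Gt x ((e1 p : W)) :=
            (e1.tsum_eq (fun k : {k : W // G.Adj j (π k)} => Gt x (k : W))).symm
        _ = ∑' p : (Σ y : {y : W // π y = j}, {k : W // k ∈ G'.neighborFinset (y : W)}),
              Gt x (p.2 : W) := tsum_congr fun p => by rw [hE1]
        _ = ∑' y : {y : W // π y = j},
              ∑' k : {k : W // k ∈ G'.neighborFinset (y : W)}, Gt x (k : W) := Summable.tsum_sigma h1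
        _ = ∑' y : {y : W // π y = j}, ∑ k ∈ G'.neighborFinset (y : W), Gt x k :=
            tsum_congr fun y => Finset.tsum_subtype (G'.neighborFinset (y : W)) (Gt x)
    calc c * (∑ l ∈ G.neighborFinset j, F l) - z * F j
        = c * (∑' y : {y : W // π y = j}, ∑ k ∈ G'.neighborFinset (y : W), Gt x k)
          - z * ∑' y : {y : W // π y = j}, Gt x (y : W) := by
            rw [tA, tB]
      _ = (∑' y : {y : W // π y = j}, c * ∑ k ∈ G'.neighborFinset (y : W), Gt x k)
          - ∑' y : {y : W // π y = j}, z * Gt x (y : W) := by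
            rw [tsum_mul_left, tsum_mul_left]
      _ = ∑' y : {y : W // π y = j},
            (c * (∑ k ∈ G'.neighborFinset (y : W), Gt x k) - z * Gt x (y : W)) :=
            (Summable.tsum_sub (hS.mul_left c) ((hGsum j).mul_left z)).symm
      _ = ∑' y : {y : W // π y = j}, (if x = (y : W) then (1 : ℂ) else 0) :=
            tsum_congr fun y => hrec x (y : W)
      _ = if i = j then 1 else 0 := by
            by_cases hij : i = j
            · subst hij
              rw [if_pos rfl]
              refine (tsum_eq_single (⟨x, hx⟩ : {y : W // π y = i}) ?_).trans (by simp)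
              intro b hb
              exact if_neg fun hxb => hb (Subtype.ext hxb.symm)
            · rw [if_neg hij]
              have hzero : ∀ y : {y : W // π y = j},
                  (if x = (y : W) then (1 : ℂ) else 0) = 0 := by
                intro y
                exact if_neg fun hxy => hij (by rw [← hx, hxy]; exact y.2)
              rw [tsum_congr hzero, tsum_zero]
  -- assemble
  have hMF : M *ᵥ F = Pi.single i 1 := by
    funext j
    have hexp : (M *ᵥ F) j = c * (A *ᵥ F) j - z * F j := by
      rw [hM, Matrix.sub_mulVec, Matrix.smul_mulVec, Matrix.smul_mulVec,
        Matrix.one_mulVec]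
      simp
    rw [hexp]
    have hadj : (A *ᵥ F) j = ∑ l ∈ G.neighborFinset j, F l := by
      rw [hA]; exact SimpleGraph.adjMatrix_mulVec_apply _ _ _
    rw [hadj, hkey j, Pi.single_apply]
    simp [eq_comm]
  have hFeq : F = M⁻¹ *ᵥ Pi.single i 1 := by
    have h := congrArg (fun w => M⁻¹ *ᵥ w) hMF
    simpa [Matrix.mulVec_mulVec, Matrix.nonsing_inv_mul M hU, Matrix.one_mulVec] using h
  intro j
  have hGfM : Gf = M⁻¹ := hGf
  have h1 : F j = M⁻¹ j i := by
    rw [hFeq]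
    simp [Matrix.mulVec_single]
  have h2 : M⁻¹ j i = M⁻¹ i j := by
    calc M⁻¹ j i = M⁻¹ᵀ i j := rfl
      _ = M⁻¹ i j := by rw [Matrix.transpose_nonsing_inv, hMT]
  rw [hGfM, ← h2, ← h1]
end

section
/- For any 0 ≤ r ≤ 1 and θ ∈ [−π, π], the complex number 1 − e^{iθ}r satisfies (1−r)/2 + √r·|θ|/π ≤ |1 − e^{iθ}r| ≤ (1−r) + |θ|. -/
/-- For `0 ≤ r ≤ 1` and `θ ∈ [−π, π]`,
`(1−r)/2 + √r·|θ|/π ≤ |1 − e^{iθ} r| ≤ (1−r) + |θ|`. -/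
theorem one_sub_exp_mul_bounds (r θ : ℝ) (hr0 : 0 ≤ r) (hr1 : r ≤ 1)
    (hθl : -Real.pi ≤ θ) (hθu : θ ≤ Real.pi) :
    (1 - r) / 2 + Real.sqrt r * |θ| / Real.pi ≤
        ‖1 - Complex.exp ((θ : ℂ) * Complex.I) * (r : ℂ)‖ ∧
      ‖1 - Complex.exp ((θ : ℂ) * Complex.I) * (r : ℂ)‖ ≤ (1 - r) + |θ| := by
  have hpi := Real.pi_pos
  set z : ℂ := 1 - Complex.exp ((θ : ℂ) * Complex.I) * (r : ℂ) with hz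
  have hsq : (‖z‖) ^ 2 = 1 - 2 * r * Real.cos θ + r ^ 2 := by
    rw [← Complex.normSq_eq_norm_sq, hz, Complex.exp_mul_I]
    simp [Complex.normSq_apply, Complex.cos_ofReal_re, Complex.sin_ofReal_re]
    have h1 := Real.sin_sq_add_cos_sq θ
    ring_nf
    nlinarith [Real.sin_sq_add_cos_sq θ]
  have habs : 0 ≤ ‖z‖ := norm_nonneg z
  constructor
  · -- lower bound
    have hcos : Real.cos θ ≤ 1 - 2 / Real.pi ^ 2 * θ ^ 2 := by
      apply Real.cos_le_one_sub_mul_cos_sq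
      rw [abs_le]; exact ⟨hθl, hθu⟩
    set b : ℝ := Real.sqrt r * |θ| / Real.pi with hb
    have hb0 : 0 ≤ b := by positivity
    have hbsq : b ^ 2 = r * θ ^ 2 / Real.pi ^ 2 := by
      rw [hb, div_pow, mul_pow, Real.sq_sqrt hr0, sq_abs]
    have hlow : ((1 - r) / 2 + b) ^ 2 ≤ (‖z‖) ^ 2 := by
      rw [hsq]
      have h4b : 4 * b ^ 2 ≤ 2 * r * (2 / Real.pi ^ 2 * θ ^ 2) := by
        rw [hbsq]; field_simp; ring_nf; nlinarith
      nlinarith [sq_nonneg ((1 - r) - 2 * b), sq_nonneg (1 - r)]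
    have : 0 ≤ (1 - r) / 2 + b := by nlinarith
    nlinarith [hlow, habs]
  · -- upper bound
    have hcos : 1 - θ ^ 2 / 2 ≤ Real.cos θ := Real.one_sub_sq_div_two_le_cos
    have hup : (‖z‖) ^ 2 ≤ ((1 - r) + |θ|) ^ 2 := by
      rw [hsq]
      nlinarith [sq_abs θ, abs_nonneg θ, sq_nonneg θ]
    have h0 : 0 ≤ (1 - r) + |θ| := by have := abs_nonneg θ; linarith
    nlinarith [hup, habs]
end
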